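/- Exact-penalty termination criterion: let μ ≥ 0 and let (X*, y*, λ*) be a global minimizer of the penalized problem. If eᵀy* = bᵀλ*, then (X*, y*) is a global optimum of the bilevel problem, i.e., (X*, y*) satisfies A vec(X*)+By* ≥ a and y* ∈ S(X*), and cᵀvec(X*)+dᵀy* ≤ cᵀvec(X)+dᵀy for every (X, y) with A vec(X)+By ≥ a and y ∈ S(X). -/
import Mathlib


open Matrix

/-- Vectorization of a matrix. -/
def vecM {m n : ℕ} (X : Matrix (Fin m) (Fin n) ℝ) : Fin m × Fin n → ℝ :=
  fun ij => X ij.1 ij.2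

/-- `y ∈ S(X)`: `y` is an optimal solution of the lower-level primal LP
`min {eᵀy : (C+X) y ≥ b}`. -/
def LowerOpt {m n : ℕ} (C : Matrix (Fin m) (Fin n) ℝ) (e : Fin n → ℝ)
    (b : Fin m → ℝ) (X : Matrix (Fin m) (Fin n) ℝ) (y : Fin n → ℝ) : Prop :=
  (∀ i, b i ≤ ((C + X) *ᵥ y) i) ∧
  ∀ y' : Fin n → ℝ, (∀ i, b i ≤ ((C + X) *ᵥ y') i) → e ⬝ᵥ y ≤ e ⬝ᵥ y'

/-- Feasibility for the penalized problem. -/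
def PenFeas {m n p : ℕ} (A : Matrix (Fin p) (Fin m × Fin n) ℝ)
    (B : Matrix (Fin p) (Fin n) ℝ) (a : Fin p → ℝ)
    (C : Matrix (Fin m) (Fin n) ℝ) (e : Fin n → ℝ) (b : Fin m → ℝ)
    (X : Matrix (Fin m) (Fin n) ℝ) (y : Fin n → ℝ) (lam : Fin m → ℝ) : Prop :=
  (∀ i, a i ≤ (A *ᵥ vecM X + B *ᵥ y) i) ∧
  (∀ i, b i ≤ ((C + X) *ᵥ y) i) ∧
  ((C + X)ᵀ *ᵥ lam = e) ∧
  (∀ i, 0 ≤ lam i)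


/-- Conic Farkas lemma, by induction on the number of generators. -/
theorem myFarkas {n : ℕ} :
    ∀ (m : ℕ) (v : Fin m → Fin n → ℝ) (e : Fin n → ℝ),
    (∃ lam : Fin m → ℝ, (∀ i, 0 ≤ lam i) ∧ ∀ j, e j = ∑ i, lam i * v i j) ∨
    (∃ w : Fin n → ℝ, (∀ i, 0 ≤ v i ⬝ᵥ w) ∧ e ⬝ᵥ w < 0) := by
  intro m
  induction m with
  | zero =>
    intro v e
    by_cases he : e = 0
    · exact Or.inl ⟨fun i => 0, fun i => le_rfl, by simp [he]⟩
    · refine Or.inr ⟨-e, fun i => i.elim0, ?_⟩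
      have : (0:ℝ) < e ⬝ᵥ e := by
        have hne : ∃ j, e j ≠ 0 := by
          by_contra h
          push_neg at h
          exact he (funext h)
        obtain ⟨j, hj⟩ := hne
        have : (0:ℝ) < ∑ k, e k * e k := by
          apply Finset.sum_pos' (fun k _ => mul_self_nonneg _)
          exact ⟨j, Finset.mem_univ j, mul_self_pos.mpr hj⟩
        simpa [dotProduct] using this
      simpa [dotProduct_neg] using neg_neg_of_pos this
  | succ m ih =>
    intro v e
    set v' : Fin m → Fin n → ℝ := fun i => v i.castSucc with hv'
    set vm : Fin n → ℝ := v (Fin.last m) with hvm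
    rcases ih v' e with ⟨lam, hlam, hsum⟩ | ⟨w, hw, hew⟩
    · refine Or.inl ⟨Fin.snoc lam 0, ?_, ?_⟩
      · intro i
        refine Fin.lastCases ?_ ?_ i
        · simp
        · intro i; simpa using hlam i
      · intro j
        rw [Fin.sum_univ_castSucc]
        simp only [Fin.snoc_castSucc, Fin.snoc_last, zero_mul, add_zero]
        exact hsum j
    · by_cases hm : 0 ≤ vm ⬝ᵥ w
      · refine Or.inr ⟨w, ?_, hew⟩
        intro i
        refine Fin.lastCases ?_ ?_ i
        · exact hm
        · intro i; exact hw i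
      · push_neg at hm
        set α : ℝ := vm ⬝ᵥ w with hα
        have hαne : α ≠ 0 := ne_of_lt hm
        set v'' : Fin m → Fin n → ℝ :=
          fun i j => v' i j - (v' i ⬝ᵥ w / α) * vm j with hv''
        set e'' : Fin n → ℝ := fun j => e j - (e ⬝ᵥ w / α) * vm j with he''
        have dot'' : ∀ (c : ℝ) (u z : Fin n → ℝ),
            (fun j => u j - c * vm j) ⬝ᵥ z
              = u ⬝ᵥ z - c * (vm ⬝ᵥ z) := by
          intro c u z
          simp [dotProduct, sub_mul, Finset.sum_sub_distrib, Finset.mul_sum,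
            mul_assoc]
        rcases ih v'' e'' with ⟨lam, hlam, hsum⟩ | ⟨w', hw', hew'⟩
        · -- reconstruct coefficients
          set μ : ℝ := (e ⬝ᵥ w - ∑ i, lam i * (v' i ⬝ᵥ w)) / α with hμ
          have hμpos : 0 ≤ μ := by
            have hnum : e ⬝ᵥ w - ∑ i, lam i * (v' i ⬝ᵥ w) < 0 := by
              have h1 : 0 ≤ ∑ i, lam i * (v' i ⬝ᵥ w) :=
                Finset.sum_nonneg fun i _ => mul_nonneg (hlam i) (hw i)
              linarith
            exact le_of_lt (div_pos_of_neg_of_neg hnum hm)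
          refine Or.inl ⟨Fin.snoc lam μ, ?_, ?_⟩
          · intro i
            refine Fin.lastCases ?_ ?_ i
            · simpa using hμpos
            · intro i; simpa using hlam i
          · intro j
            rw [Fin.sum_univ_castSucc]
            simp only [Fin.snoc_castSucc, Fin.snoc_last]
            have h1 := hsum j
            rw [he''] at h1
            have : e j = ∑ i, lam i * v'' i j + (e ⬝ᵥ w / α) * vm j := by
              dsimp at h1 ⊢
              linarith
            rw [this]
            have hexp : ∑ i, lam i * v'' i j
                = ∑ i, lam i * v' i j - (∑ i, lam i * (v' i ⬝ᵥ w / α)) * vm j := by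
              rw [hv'']
              simp [mul_sub, Finset.sum_sub_distrib, Finset.sum_mul, mul_assoc]
            rw [hexp, hμ]
            have : ∑ i, lam i * (v' i ⬝ᵥ w / α) = (∑ i, lam i * (v' i ⬝ᵥ w)) / α := by
              rw [Finset.sum_div]
              congr 1; ext i; ring
            rw [this]
            ring
        · -- build new separating vector
          set w'' : Fin n → ℝ := fun j => w' j - (vm ⬝ᵥ w' / α) * w j with hw''
          have dotw'' : ∀ u : Fin n → ℝ,
              u ⬝ᵥ w'' = u ⬝ᵥ w' - (vm ⬝ᵥ w' / α) * (u ⬝ᵥ w) := by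
            intro u
            simp [hw'', dotProduct, mul_sub, Finset.sum_sub_distrib,
              Finset.mul_sum, mul_left_comm]
          refine Or.inr ⟨w'', ?_, ?_⟩
          · intro i
            refine Fin.lastCases ?_ ?_ i
            · rw [show v (Fin.last m) = vm from rfl, dotw'']
              rw [div_mul_cancel₀ _ hαne]
              simp
            · intro i
              have h := hw' i
              rw [hv''] at h
              rw [dot''] at h
              rw [show v i.castSucc = v' i from rfl, dotw'']
              have hc : (vm ⬝ᵥ w' / α) * (v' i ⬝ᵥ w)
                  = (v' i ⬝ᵥ w / α) * (vm ⬝ᵥ w') := by ring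
              linarith [h]
          · have h := hew'
            rw [he''] at h
            rw [dot''] at h
            rw [dotw'']
            have hc : (vm ⬝ᵥ w' / α) * (e ⬝ᵥ w)
                  = (e ⬝ᵥ w / α) * (vm ⬝ᵥ w') := by ring
            linarith [h]


/-- If a direction `w` keeps all tight constraints, a small step stays feasible. -/
theorem descent_step {m n : ℕ} (M : Matrix (Fin m) (Fin n) ℝ) (b : Fin m → ℝ)
    (y w : Fin n → ℝ) (h1 : ∀ i, b i ≤ (M *ᵥ y) i)
    (h2 : ∀ i, (M *ᵥ y) i = b i → 0 ≤ (M *ᵥ w) i) :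
    ∃ t : ℝ, 0 < t ∧ ∀ i, b i ≤ (M *ᵥ (y + t • w)) i := by
  classical
  set g : Fin m → ℝ := fun i =>
    if (M *ᵥ w) i < 0 then ((M *ᵥ y) i - b i) / (-((M *ᵥ w) i)) else 1 with hg
  set s : Finset ℝ := insert 1 (Finset.univ.image g) with hs
  have hne : s.Nonempty := ⟨1, Finset.mem_insert_self _ _⟩
  set t : ℝ := s.min' hne with ht
  have hgpos : ∀ i, 0 < g i := by
    intro i
    rw [hg]
    by_cases h : (M *ᵥ w) i < 0
    · simp only [h, if_true]
      have hslack : b i < (M *ᵥ y) i := by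
        rcases lt_or_eq_of_le (h1 i) with h' | h'
        · exact h'
        · exact absurd (h2 i h'.symm) (not_le.mpr h)
      exact div_pos (by linarith) (by linarith)
    · simp [h]
  have htpos : 0 < t := by
    rw [ht]
    apply (Finset.lt_min'_iff s hne).mpr
    intro x hx
    rcases Finset.mem_insert.mp hx with h | h
    · simp [h]
    · obtain ⟨i, _, hi⟩ := Finset.mem_image.mp h
      rw [← hi]; exact hgpos i
  refine ⟨t, htpos, ?_⟩
  intro i
  have hmv : (M *ᵥ (y + t • w)) i = (M *ᵥ y) i + t * (M *ᵥ w) i := by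
    simp [Matrix.mulVec_add, Matrix.mulVec_smul, smul_eq_mul]
  rw [hmv]
  by_cases h : (M *ᵥ w) i < 0
  · have hle : t ≤ g i := Finset.min'_le s _ (Finset.mem_insert_of_mem
      (Finset.mem_image.mpr ⟨i, Finset.mem_univ i, rfl⟩))
    rw [hg] at hle
    simp only [h, if_true] at hle
    have hpos : 0 < -((M *ᵥ w) i) := by linarith
    have := (le_div_iff₀ hpos).mp hle
    have h1i := h1 i
    nlinarith
  · push_neg at h
    have := h1 i
    nlinarith [mul_nonneg htpos.le h]

/-- LP strong duality at an optimal point: existence of a complementary dual solution. -/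
theorem strong_dual {m n : ℕ} (M : Matrix (Fin m) (Fin n) ℝ) (b : Fin m → ℝ)
    (e : Fin n → ℝ) (y : Fin n → ℝ)
    (hfeas : ∀ i, b i ≤ (M *ᵥ y) i)
    (hopt : ∀ y' : Fin n → ℝ, (∀ i, b i ≤ (M *ᵥ y') i) → e ⬝ᵥ y ≤ e ⬝ᵥ y') :
    ∃ lam : Fin m → ℝ, (∀ i, 0 ≤ lam i) ∧ Mᵀ *ᵥ lam = e ∧ b ⬝ᵥ lam = e ⬝ᵥ y := by
  classical
  set u : Fin m → Fin n → ℝ := fun i j => if (M *ᵥ y) i = b i then M i j else 0 with hu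
  rcases myFarkas m u e with ⟨lam, hlam, hsum⟩ | ⟨w, hw, hew⟩
  · set lam' : Fin m → ℝ := fun i => if (M *ᵥ y) i = b i then lam i else 0 with hlam'
    have hnn : ∀ i, 0 ≤ lam' i := by
      intro i; rw [hlam']
      by_cases h : (M *ᵥ y) i = b i <;> simp [h, hlam i]
    have heq : Mᵀ *ᵥ lam' = e := by
      funext j
      rw [Matrix.mulVec, dotProduct]
      rw [hsum j]
      apply Finset.sum_congr rfl
      intro i _
      rw [hlam', hu]
      by_cases h : (M *ᵥ y) i = b i <;> simp [h, Matrix.transpose_apply, mul_comm]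
    refine ⟨lam', hnn, heq, ?_⟩
    have h1 : b ⬝ᵥ lam' = (M *ᵥ y) ⬝ᵥ lam' := by
      rw [dotProduct, dotProduct]
      apply Finset.sum_congr rfl
      intro i _
      rw [hlam']
      by_cases h : (M *ᵥ y) i = b i <;> simp [h]
    rw [h1]
    calc (M *ᵥ y) ⬝ᵥ lam' = lam' ⬝ᵥ (M *ᵥ y) := dotProduct_comm _ _
      _ = (Mᵀ *ᵥ lam') ⬝ᵥ y := by
          rw [Matrix.dotProduct_mulVec, ← Matrix.vecMul_transpose,
            Matrix.transpose_transpose]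
      _ = e ⬝ᵥ y := by rw [heq]
  · exfalso
    have h2 : ∀ i, (M *ᵥ y) i = b i → 0 ≤ (M *ᵥ w) i := by
      intro i hi
      have := hw i
      rw [hu] at this
      simp only [hu] at this
      rw [Matrix.mulVec, dotProduct]
      simpa [hi, dotProduct] using this
    obtain ⟨t, htpos, hfeas'⟩ := descent_step M b y w hfeas h2
    have := hopt (y + t • w) hfeas'
    have hdot : e ⬝ᵥ (y + t • w) = e ⬝ᵥ y + t * (e ⬝ᵥ w) := by
      simp [dotProduct_add, dotProduct_smul, smul_eq_mul]
    nlinarith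


/-- Weak LP duality. -/
theorem weak_dual {m n : ℕ} (M : Matrix (Fin m) (Fin n) ℝ) (b : Fin m → ℝ)
    (e : Fin n → ℝ) (lam : Fin m → ℝ) (y' : Fin n → ℝ)
    (hd : Mᵀ *ᵥ lam = e) (hnn : ∀ i, 0 ≤ lam i)
    (hp : ∀ i, b i ≤ (M *ᵥ y') i) : b ⬝ᵥ lam ≤ e ⬝ᵥ y' := by
  have h1 : e ⬝ᵥ y' = lam ⬝ᵥ (M *ᵥ y') := by
    rw [← hd, Matrix.dotProduct_mulVec, Matrix.mulVec_transpose]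
  rw [h1, dotProduct_comm]
  apply Finset.sum_le_sum
  intro i _
  exact mul_le_mul_of_nonneg_left (hp i) (hnn i)

/-- Exact-penalty termination criterion: if `(X*, y*, λ*)` is a global
minimizer of the penalized problem (with penalty weight `μ ≥ 0`) and the
duality gap vanishes, `eᵀy* = bᵀλ*`, then `(X*, y*)` is a global optimum of
the bilevel problem. -/
theorem exact_penalty_termination (m n p : ℕ)
    (A : Matrix (Fin p) (Fin m × Fin n) ℝ) (B : Matrix (Fin p) (Fin n) ℝ)
    (c : Fin m × Fin n → ℝ) (d : Fin n → ℝ) (a : Fin p → ℝ)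
    (C : Matrix (Fin m) (Fin n) ℝ) (e : Fin n → ℝ) (b : Fin m → ℝ)
    (μ : ℝ) (hμ : 0 ≤ μ)
    (Xs : Matrix (Fin m) (Fin n) ℝ) (ys : Fin n → ℝ) (lams : Fin m → ℝ)
    (hfeas : PenFeas A B a C e b Xs ys lams)
    (hmin : ∀ X y lam, PenFeas A B a C e b X y lam →
      c ⬝ᵥ vecM Xs + d ⬝ᵥ ys + μ * (e ⬝ᵥ ys - b ⬝ᵥ lams) ≤
        c ⬝ᵥ vecM X + d ⬝ᵥ y + μ * (e ⬝ᵥ y - b ⬝ᵥ lam))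
    (hgap : e ⬝ᵥ ys = b ⬝ᵥ lams) :
    ((∀ i, a i ≤ (A *ᵥ vecM Xs + B *ᵥ ys) i) ∧ LowerOpt C e b Xs ys) ∧
    (∀ (X : Matrix (Fin m) (Fin n) ℝ) (y : Fin n → ℝ),
      (∀ i, a i ≤ (A *ᵥ vecM X + B *ᵥ y) i) → LowerOpt C e b X y →
        c ⬝ᵥ vecM Xs + d ⬝ᵥ ys ≤ c ⬝ᵥ vecM X + d ⬝ᵥ y) := by
  obtain ⟨hA, hb, hdual, hnn⟩ := hfeas
  have hlow : LowerOpt C e b Xs ys := by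
    refine ⟨hb, ?_⟩
    intro y' hy'
    have := weak_dual (C + Xs) b e lams y' hdual hnn hy'
    linarith [hgap ▸ this]
  refine ⟨⟨hA, hlow⟩, ?_⟩
  intro X y hXA hXlow
  obtain ⟨lam, hlnn, hld, hlgap⟩ :=
    strong_dual (C + X) b e y hXlow.1 hXlow.2
  have hpf : PenFeas A B a C e b X y lam := ⟨hXA, hXlow.1, hld, hlnn⟩
  have := hmin X y lam hpf
  rw [hgap] at this
  rw [hlgap] at this
  simp at this
  linarith
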